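/- arXiv:1108.0481 — 2 statements merged into one kernel-verified Lean document; each statement's English description precedes it below -/
import Mathlib

section
/- Let S = 3, T ≥ 1, and let x ∈ ℕ⁶ be a transition-count vector of some word in [3]^T_{NL} such that the multigraph G(x) contains a 2-cycle i→j→i and a 2-cycle k→l→k with {i,j} ≠ {k,l}. Then x is not a vertex of the polytope P = conv{A_w : w ∈ [3]^T_{NL}}; specifically, x = ½y + ½z where y = x + e_{kl} + e_{lk} − e_{ij} − e_{ji} and z = x + e_{ij} + e_{ji} − e_{kl} − e_{lk} are both in P. -/
/-- The number of transitions `p.1 → p.2` in the word `w` of length `T` over `[S]`. -/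
def trCount (S T : ℕ) (w : Fin T → Fin S) (p : Fin S × Fin S) : ℕ :=
  (Finset.univ.filter (fun t : Fin (T - 1) =>
    w ⟨t.1, by have := t.2; omega⟩ = p.1 ∧ w ⟨t.1 + 1, by have := t.2; omega⟩ = p.2)).card

/-- A word has no self-loops (no two consecutive equal letters). -/
def NoLoop (S T : ℕ) (w : Fin T → Fin S) : Prop :=
  ∀ t : Fin (T - 1), w ⟨t.1, by have := t.2; omega⟩ ≠ w ⟨t.1 + 1, by have := t.2; omega⟩

instance (S T : ℕ) : DecidablePred (NoLoop S T) := fun w => by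
  unfold NoLoop; infer_instance


lemma tri (v : Fin 3) : v = 0 ∨ v = 1 ∨ v = 2 := by fin_cases v <;> simp

def C1 (a b c d e f : ℕ) (s : Fin 3) : Prop :=
  a + b ≤ c + e + (if s = 0 then 1 else 0) ∧
  c + d ≤ a + f + (if s = 1 then 1 else 0) ∧
  e + f ≤ b + d + (if s = 2 then 1 else 0)

def C2 (a b c d e f : ℕ) (s : Fin 3) : Prop :=
  (s ≠ 0 → 1 ≤ a+b+c+e →
    (if s = 1 then (1 ≤ a+c ∨ (1 ≤ d+f ∧ 1 ≤ b+e)) else (1 ≤ b+e ∨ (1 ≤ d+f ∧ 1 ≤ a+c)))) ∧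
  (s ≠ 1 → 1 ≤ c+d+a+f →
    (if s = 0 then (1 ≤ a+c ∨ (1 ≤ b+e ∧ 1 ≤ d+f)) else (1 ≤ d+f ∨ (1 ≤ b+e ∧ 1 ≤ a+c)))) ∧
  (s ≠ 2 → 1 ≤ e+f+b+d →
    (if s = 0 then (1 ≤ b+e ∨ (1 ≤ a+c ∧ 1 ≤ d+f)) else (1 ≤ d+f ∨ (1 ≤ a+c ∧ 1 ≤ b+e))))

lemma transfer (a b c d e f a' b' c' d' e' f' : ℕ) (s : Fin 3)
    (hC1 : C1 a b c d e f s)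
    (hb0 : a'+b'+(c+e) = (a+b)+(c'+e'))
    (hb1 : c'+d'+(a+f) = (c+d)+(a'+f'))
    (hb2 : e'+f'+(b+d) = (e+f)+(b'+d'))
    (hnz : 1 ≤ a'+b'+c'+d'+e'+f') :
    ∃ s', C1 a' b' c' d' e' f' s' ∧ C2 a' b' c' d' e' f' s' := by
  have H : (C1 a' b' c' d' e' f' 0 ∧ C2 a' b' c' d' e' f' 0) ∨
      (C1 a' b' c' d' e' f' 1 ∧ C2 a' b' c' d' e' f' 1) ∨
      (C1 a' b' c' d' e' f' 2 ∧ C2 a' b' c' d' e' f' 2) := by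
    rcases tri s with rfl | rfl | rfl <;>
      (simp only [C1, C2] at hC1 ⊢; simp at hC1 ⊢; omega)
  rcases H with h | h | h
  exacts [⟨0, h⟩, ⟨1, h⟩, ⟨2, h⟩]

lemma trCount_cons (T : ℕ) (s : Fin 3) (w : Fin (T+1) → Fin 3) (p : Fin 3 × Fin 3) :
    trCount 3 (T+2) (Fin.cons s w) p
      = (if s = p.1 ∧ w 0 = p.2 then 1 else 0) + trCount 3 (T+1) w p := by
  unfold trCount
  rw [Finset.card_filter, Finset.card_filter]
  show (∑ t : Fin (T+1), if (Fin.cons s w : Fin (T+2) → Fin 3) ⟨t.1, by omega⟩ = p.1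
          ∧ (Fin.cons s w : Fin (T+2) → Fin 3) ⟨t.1 + 1, by omega⟩ = p.2 then 1 else 0)
      = _ + (∑ t : Fin T, if w ⟨t.1, by omega⟩ = p.1 ∧ w ⟨t.1 + 1, by omega⟩ = p.2 then 1 else 0)
  rw [Fin.sum_univ_succ]
  apply congrArg₂ _ rfl ?_
  apply Finset.sum_congr rfl
  intro t _
  have h0 : (Fin.cons s w : Fin (T+2) → Fin 3) ⟨(Fin.succ t).1, by omega⟩ = w ⟨t.1, by omega⟩ := rfl
  have h1 : (Fin.cons s w : Fin (T+2) → Fin 3) ⟨(Fin.succ t).1 + 1, by omega⟩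
        = w ⟨t.1 + 1, by omega⟩ := rfl
  rw [h0, h1]

lemma noLoop_cons (T : ℕ) (s : Fin 3) (w : Fin (T+1) → Fin 3) (hs : s ≠ w 0)
    (hw : NoLoop 3 (T+1) w) : NoLoop 3 (T+2) (Fin.cons s w) := by
  intro t
  rcases t with ⟨tv, ht⟩
  match tv, ht with
  | 0, ht =>
    show (Fin.cons s w : Fin (T+2) → Fin 3) ⟨0, by omega⟩ ≠ (Fin.cons s w : Fin (T+2) → Fin 3) ⟨1, by omega⟩
    exact hs
  | (r+1), ht =>
    show (Fin.cons s w : Fin (T+2) → Fin 3) ⟨r+1, by omega⟩ ≠ (Fin.cons s w : Fin (T+2) → Fin 3) ⟨r+1+1, by omega⟩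
    have h0 : (Fin.cons s w : Fin (T+2) → Fin 3) ⟨r+1, by omega⟩ = w ⟨r, by omega⟩ := rfl
    have h1 : (Fin.cons s w : Fin (T+2) → Fin 3) ⟨r+1+1, by omega⟩ = w ⟨r+1, by omega⟩ := rfl
    rw [h0, h1]
    exact hw ⟨r, by simp at ht ⊢; omega⟩

lemma euler : ∀ (N a b c d e f : ℕ) (s : Fin 3), a+b+c+d+e+f = N →
    C1 a b c d e f s → C2 a b c d e f s →
    ∃ w : Fin (N+1) → Fin 3, NoLoop 3 (N+1) w ∧ w 0 = s ∧
      trCount 3 (N+1) w (0,1) = a ∧ trCount 3 (N+1) w (0,2) = b ∧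
      trCount 3 (N+1) w (1,0) = c ∧ trCount 3 (N+1) w (1,2) = d ∧
      trCount 3 (N+1) w (2,0) = e ∧ trCount 3 (N+1) w (2,1) = f := by
  intro N
  induction N with
  | zero =>
    intro a b c d e f s hsum h1 h2
    refine ⟨fun _ => s, fun t => absurd t.2 (by omega), rfl, ?_, ?_, ?_, ?_, ?_, ?_⟩ <;>
      · show (Finset.univ.filter _).card = _
        rw [show (Finset.univ : Finset (Fin (1-1))) = ∅ from rfl, Finset.filter_empty,
          Finset.card_empty]
        omega
  | succ N IH =>
    intro a b c d e f s hsum hC1 hC2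
    rcases tri s with rfl | rfl | rfl
    · have hpick : (1 ≤ a ∧ C1 (a-1) b c d e f 1 ∧ C2 (a-1) b c d e f 1)
                 ∨ (1 ≤ b ∧ C1 a (b-1) c d e f 2 ∧ C2 a (b-1) c d e f 2) := by
        simp only [C1, C2] at hC1 hC2 ⊢
        simp at hC1 hC2 ⊢
        omega
      rcases hpick with ⟨ha, hc1, hc2⟩ | ⟨hb, hc1, hc2⟩
      · obtain ⟨w', hnl, hw0, E1, E2, E3, E4, E5, E6⟩ :=
          IH (a-1) b c d e f 1 (by omega) hc1 hc2
        refine ⟨Fin.cons 0 w', noLoop_cons _ _ _ (by rw [hw0]; decide) hnl,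
          Fin.cons_zero _ _, ?_, ?_, ?_, ?_, ?_, ?_⟩ <;>
          simp [trCount_cons, hw0, E1, E2, E3, E4, E5, E6] <;> omega
      · obtain ⟨w', hnl, hw0, E1, E2, E3, E4, E5, E6⟩ :=
          IH a (b-1) c d e f 2 (by omega) hc1 hc2
        refine ⟨Fin.cons 0 w', noLoop_cons _ _ _ (by rw [hw0]; decide) hnl,
          Fin.cons_zero _ _, ?_, ?_, ?_, ?_, ?_, ?_⟩ <;>
          simp [trCount_cons, hw0, E1, E2, E3, E4, E5, E6] <;> omega
    · have hpick : (1 ≤ c ∧ C1 a b (c-1) d e f 0 ∧ C2 a b (c-1) d e f 0)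
                 ∨ (1 ≤ d ∧ C1 a b c (d-1) e f 2 ∧ C2 a b c (d-1) e f 2) := by
        simp only [C1, C2] at hC1 hC2 ⊢
        simp at hC1 hC2 ⊢
        omega
      rcases hpick with ⟨ha, hc1, hc2⟩ | ⟨hb, hc1, hc2⟩
      · obtain ⟨w', hnl, hw0, E1, E2, E3, E4, E5, E6⟩ :=
          IH a b (c-1) d e f 0 (by omega) hc1 hc2
        refine ⟨Fin.cons 1 w', noLoop_cons _ _ _ (by rw [hw0]; decide) hnl,
          Fin.cons_zero _ _, ?_, ?_, ?_, ?_, ?_, ?_⟩ <;>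
          simp [trCount_cons, hw0, E1, E2, E3, E4, E5, E6] <;> omega
      · obtain ⟨w', hnl, hw0, E1, E2, E3, E4, E5, E6⟩ :=
          IH a b c (d-1) e f 2 (by omega) hc1 hc2
        refine ⟨Fin.cons 1 w', noLoop_cons _ _ _ (by rw [hw0]; decide) hnl,
          Fin.cons_zero _ _, ?_, ?_, ?_, ?_, ?_, ?_⟩ <;>
          simp [trCount_cons, hw0, E1, E2, E3, E4, E5, E6] <;> omega
    · have hpick : (1 ≤ e ∧ C1 a b c d (e-1) f 0 ∧ C2 a b c d (e-1) f 0)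
                 ∨ (1 ≤ f ∧ C1 a b c d e (f-1) 1 ∧ C2 a b c d e (f-1) 1) := by
        simp only [C1, C2] at hC1 hC2 ⊢
        simp at hC1 hC2 ⊢
        omega
      rcases hpick with ⟨ha, hc1, hc2⟩ | ⟨hb, hc1, hc2⟩
      · obtain ⟨w', hnl, hw0, E1, E2, E3, E4, E5, E6⟩ :=
          IH a b c d (e-1) f 0 (by omega) hc1 hc2
        refine ⟨Fin.cons 2 w', noLoop_cons _ _ _ (by rw [hw0]; decide) hnl,
          Fin.cons_zero _ _, ?_, ?_, ?_, ?_, ?_, ?_⟩ <;>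
          simp [trCount_cons, hw0, E1, E2, E3, E4, E5, E6] <;> omega
      · obtain ⟨w', hnl, hw0, E1, E2, E3, E4, E5, E6⟩ :=
          IH a b c d e (f-1) 1 (by omega) hc1 hc2
        refine ⟨Fin.cons 2 w', noLoop_cons _ _ _ (by rw [hw0]; decide) hnl,
          Fin.cons_zero _ _, ?_, ?_, ?_, ?_, ?_, ?_⟩ <;>
          simp [trCount_cons, hw0, E1, E2, E3, E4, E5, E6] <;> omega

lemma core (T a b c d e f a' b' c' d' e' f' : ℕ) (s : Fin 3)
    (hC1 : C1 a b c d e f s)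
    (hb0 : a'+b'+(c+e) = (a+b)+(c'+e'))
    (hb1 : c'+d'+(a+f) = (c+d)+(a'+f'))
    (hb2 : e'+f'+(b+d) = (e+f)+(b'+d'))
    (hnz : 1 ≤ a'+b'+c'+d'+e'+f')
    (hsum' : a'+b'+c'+d'+e'+f' = T) :
    ∃ w : Fin (T+1) → Fin 3, NoLoop 3 (T+1) w ∧
      trCount 3 (T+1) w (0,1) = a' ∧ trCount 3 (T+1) w (0,2) = b' ∧
      trCount 3 (T+1) w (1,0) = c' ∧ trCount 3 (T+1) w (1,2) = d' ∧
      trCount 3 (T+1) w (2,0) = e' ∧ trCount 3 (T+1) w (2,1) = f' := by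
  obtain ⟨s', h1, h2⟩ := transfer a b c d e f a' b' c' d' e' f' s hC1 hb0 hb1 hb2 hnz
  obtain ⟨w, hnl, _, E⟩ := euler T a' b' c' d' e' f' s' hsum' h1 h2
  exact ⟨w, hnl, E⟩
lemma trCount_one (u : Fin 1 → Fin 3) (p : Fin 3 × Fin 3) : trCount 3 1 u p = 0 := by
  show (Finset.univ.filter _).card = 0
  rw [show (Finset.univ : Finset (Fin (1-1))) = ∅ from rfl, Finset.filter_empty,
    Finset.card_empty]

lemma forward : ∀ (T : ℕ) (u : Fin (T+1) → Fin 3), NoLoop 3 (T+1) u →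
    trCount 3 (T+1) u (0,1) + trCount 3 (T+1) u (0,2) + trCount 3 (T+1) u (1,0) +
      trCount 3 (T+1) u (1,2) + trCount 3 (T+1) u (2,0) + trCount 3 (T+1) u (2,1) = T ∧
    C1 (trCount 3 (T+1) u (0,1)) (trCount 3 (T+1) u (0,2)) (trCount 3 (T+1) u (1,0))
       (trCount 3 (T+1) u (1,2)) (trCount 3 (T+1) u (2,0)) (trCount 3 (T+1) u (2,1)) (u 0) := by
  intro T
  induction T with
  | zero =>
    intro u _
    rcases tri (u 0) with h | h | h <;> rw [h] <;> simp [C1, trCount_one]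
  | succ T IH =>
    intro u hu
    obtain ⟨s0, u', rfl⟩ : ∃ s0 u', u = Fin.cons s0 u' :=
      ⟨u 0, fun t => u t.succ, funext fun t => by cases t using Fin.cases <;> simp⟩
    have h01 : s0 ≠ u' 0 := by
      have H := hu ⟨0, by omega⟩
      have e0 : (Fin.cons s0 u' : Fin (T+2) → Fin 3) ⟨(0:ℕ), by omega⟩ = s0 := rfl
      have e1 : (Fin.cons s0 u' : Fin (T+2) → Fin 3) ⟨(0:ℕ)+1, by omega⟩ = u' ⟨0, by omega⟩ := rfl
      rw [e0, e1] at H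
      intro hEq; exact H (by rw [hEq]; rfl)
    have hnl' : NoLoop 3 (T+1) u' := by
      intro t
      have H := hu ⟨t.1+1, by omega⟩
      have e0 : (Fin.cons s0 u' : Fin (T+2) → Fin 3) ⟨t.1+1, by omega⟩ = u' ⟨t.1, by omega⟩ := rfl
      have e1 : (Fin.cons s0 u' : Fin (T+2) → Fin 3) ⟨t.1+1+1, by omega⟩ = u' ⟨t.1+1, by omega⟩ := rfl
      rw [e0, e1] at H
      exact H
    obtain ⟨hsum', hC1'⟩ := IH u' hnl'
    rcases tri s0 with rfl | rfl | rfl <;> rcases tri (u' 0) with h2 | h2 | h2 <;>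
      rw [h2] at h01 hC1' <;>
      first
      | exact absurd rfl h01
      | (simp [trCount_cons, h2, C1, Fin.cons_zero] at hC1' ⊢; omega)

def adjv (x : ℕ) (m n i j k l : Fin 3) : ℕ :=
  x + (if ((m,n) : Fin 3 × Fin 3) = (k,l) then 1 else 0)
    + (if ((m,n) : Fin 3 × Fin 3) = (l,k) then 1 else 0)
    - (if ((m,n) : Fin 3 × Fin 3) = (i,j) then 1 else 0)
    - (if ((m,n) : Fin 3 × Fin 3) = (j,i) then 1 else 0)

set_option maxHeartbeats 2000000 in
lemma surgery (M : ℕ) (u : Fin (M+1) → Fin 3) (hu : NoLoop 3 (M+1) u)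
    (i j k l : Fin 3) (hij : i ≠ j) (hkl : k ≠ l)
    (hdiff : ¬((i = k ∧ j = l) ∨ (i = l ∧ j = k)))
    (h1 : 1 ≤ trCount 3 (M+1) u (i,j)) (h2 : 1 ≤ trCount 3 (M+1) u (j,i)) :
    ∃ w : Fin (M+1) → Fin 3, NoLoop 3 (M+1) w ∧ ∀ p : Fin 3 × Fin 3, p.1 ≠ p.2 →
      (trCount 3 (M+1) w p : ℤ) = (trCount 3 (M+1) u p : ℤ)
        + (if p = (k,l) then 1 else 0) + (if p = (l,k) then 1 else 0)
        - (if p = (i,j) then 1 else 0) - (if p = (j,i) then 1 else 0) := by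
  obtain ⟨hsumx, hC1x⟩ := forward M u hu
  rcases tri i with hi | hi | hi <;> rcases tri j with hj | hj | hj <;>
    rcases tri k with hk | hk | hk <;> rcases tri l with hl | hl | hl
  all_goals try (exfalso; subst hi hj hk hl; simp at hij hkl hdiff; done)
  all_goals
    obtain ⟨w, hnl, E1, E2, E3, E4, E5, E6⟩ :=
      core M (trCount 3 (M+1) u (0,1)) (trCount 3 (M+1) u (0,2))
        (trCount 3 (M+1) u (1,0)) (trCount 3 (M+1) u (1,2))
        (trCount 3 (M+1) u (2,0)) (trCount 3 (M+1) u (2,1))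
        (adjv (trCount 3 (M+1) u (0,1)) 0 1 i j k l)
        (adjv (trCount 3 (M+1) u (0,2)) 0 2 i j k l)
        (adjv (trCount 3 (M+1) u (1,0)) 1 0 i j k l)
        (adjv (trCount 3 (M+1) u (1,2)) 1 2 i j k l)
        (adjv (trCount 3 (M+1) u (2,0)) 2 0 i j k l)
        (adjv (trCount 3 (M+1) u (2,1)) 2 1 i j k l)
        (u 0) hC1x
        (by subst hi hj hk hl; simp [adjv] at h1 h2 ⊢ <;> try omega)
        (by subst hi hj hk hl; simp [adjv] at h1 h2 ⊢ <;> try omega)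
        (by subst hi hj hk hl; simp [adjv] at h1 h2 ⊢ <;> try omega)
        (by subst hi hj hk hl; simp [adjv] at h1 h2 ⊢ <;> try omega)
        (by subst hi hj hk hl; simp [adjv] at h1 h2 ⊢ <;> try omega)
  all_goals refine ⟨w, hnl, ?_⟩
  all_goals rintro ⟨p1, p2⟩ hp
  all_goals
    rcases tri p1 with hp1 | hp1 | hp1 <;> rcases tri p2 with hp2 | hp2 | hp2 <;>
      subst hp1 hp2 <;> subst hi hj hk hl <;>
      first
      | exact absurd rfl hp
      | (simp [adjv] at E1 E2 E3 E4 E5 E6 h1 h2 ⊢; omega)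


lemma trCount_le (S T : ℕ) (w : Fin T → Fin S) (p : Fin S × Fin S) :
    trCount S T w p ≤ T - 1 :=
  le_trans (Finset.card_filter_le _ _) (by simp)

set_option maxHeartbeats 1000000 in
/-- If the transition-count vector `x` of a no-self-loop word over three states contains
two 2-cycles on different vertex pairs, then `x` is not a vertex of the polytope
`P = conv(A)`: explicitly `x = ½y + ½z` with `y = x + e_{kl} + e_{lk} - e_{ij} - e_{ji}`
and `z = x + e_{ij} + e_{ji} - e_{kl} - e_{lk}` both in `P`. -/
theorem stmt14 (T : ℕ) (u : Fin T → Fin 3) (hu : NoLoop 3 T u)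
    (x : {p : Fin 3 × Fin 3 // p.1 ≠ p.2} → ℕ)
    (hx : ∀ p, x p = trCount 3 T u p.1)
    (i j k l : Fin 3) (hij : i ≠ j) (hkl : k ≠ l)
    (hdiff : ¬((i = k ∧ j = l) ∨ (i = l ∧ j = k)))
    (h1 : 1 ≤ x ⟨(i, j), hij⟩) (h2 : 1 ≤ x ⟨(j, i), hij.symm⟩)
    (h3 : 1 ≤ x ⟨(k, l), hkl⟩) (h4 : 1 ≤ x ⟨(l, k), hkl.symm⟩) :
    let P := convexHull ℝ (Set.range fun w : {w : Fin T → Fin 3 // NoLoop 3 T w} =>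
      fun p : {p : Fin 3 × Fin 3 // p.1 ≠ p.2} => (trCount 3 T w.1 p.1 : ℝ));
    let y : {p : Fin 3 × Fin 3 // p.1 ≠ p.2} → ℝ := fun p =>
      (x p : ℝ) + (if p.1 = (k, l) then 1 else 0) + (if p.1 = (l, k) then 1 else 0)
        - (if p.1 = (i, j) then 1 else 0) - (if p.1 = (j, i) then 1 else 0);
    let z : {p : Fin 3 × Fin 3 // p.1 ≠ p.2} → ℝ := fun p =>
      (x p : ℝ) + (if p.1 = (i, j) then 1 else 0) + (if p.1 = (j, i) then 1 else 0)
        - (if p.1 = (k, l) then 1 else 0) - (if p.1 = (l, k) then 1 else 0);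
    y ∈ P ∧ z ∈ P ∧ (∀ p, (x p : ℝ) = (1 / 2) * y p + (1 / 2) * z p) ∧
      (fun p => (x p : ℝ)) ∉ Set.extremePoints ℝ P := by
  intro P y z
  have hT2 : 2 ≤ T := by
    have h1' := h1
    rw [hx] at h1'
    have hle := trCount_le 3 T u (↑(⟨(i,j), hij⟩ : {p : Fin 3 × Fin 3 // p.1 ≠ p.2}))
    omega
  obtain ⟨M, rfl⟩ : ∃ M, T = M + 1 := ⟨T - 1, by omega⟩
  have h1' : 1 ≤ trCount 3 (M+1) u (i,j) := by rw [← hx ⟨(i,j), hij⟩]; exact h1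
  have h2' : 1 ≤ trCount 3 (M+1) u (j,i) := by rw [← hx ⟨(j,i), hij.symm⟩]; exact h2
  have h3' : 1 ≤ trCount 3 (M+1) u (k,l) := by rw [← hx ⟨(k,l), hkl⟩]; exact h3
  have h4' : 1 ≤ trCount 3 (M+1) u (l,k) := by rw [← hx ⟨(l,k), hkl.symm⟩]; exact h4
  obtain ⟨wy, hnly, Ey⟩ := surgery M u hu i j k l hij hkl hdiff h1' h2'
  obtain ⟨wz, hnlz, Ez⟩ := surgery M u hu k l i j hkl hij
    (fun h => hdiff (h.elim (fun hh => Or.inl ⟨hh.1.symm, hh.2.symm⟩)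
      (fun hh => Or.inr ⟨hh.2.symm, hh.1.symm⟩))) h3' h4'
  have hyeq : y = fun p : {p : Fin 3 × Fin 3 // p.1 ≠ p.2} => (trCount 3 (M+1) wy p.1 : ℝ) := by
    funext p
    have E := Ey p.1 p.2
    have E2 : ((trCount 3 (M+1) wy p.1 : ℤ) : ℝ)
        = (((trCount 3 (M+1) u p.1 : ℤ)
          + (if p.1 = (k,l) then 1 else 0) + (if p.1 = (l,k) then 1 else 0)
          - (if p.1 = (i,j) then 1 else 0) - (if p.1 = (j,i) then 1 else 0) : ℤ) : ℝ) :=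
      congrArg (fun t : ℤ => (t : ℝ)) E
    simp only [Int.cast_add, Int.cast_sub, Int.cast_natCast,
      apply_ite (fun t : ℤ => (t : ℝ)), Int.cast_one, Int.cast_zero] at E2
    show (x p : ℝ) + (if p.1 = (k, l) then 1 else 0) + (if p.1 = (l, k) then 1 else 0)
        - (if p.1 = (i, j) then 1 else 0) - (if p.1 = (j, i) then 1 else 0)
        = (trCount 3 (M+1) wy p.1 : ℝ)
    rw [hx p]
    exact E2.symm
  have hzeq : z = fun p : {p : Fin 3 × Fin 3 // p.1 ≠ p.2} => (trCount 3 (M+1) wz p.1 : ℝ) := by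
    funext p
    have E := Ez p.1 p.2
    have E2 : ((trCount 3 (M+1) wz p.1 : ℤ) : ℝ)
        = (((trCount 3 (M+1) u p.1 : ℤ)
          + (if p.1 = (i,j) then 1 else 0) + (if p.1 = (j,i) then 1 else 0)
          - (if p.1 = (k,l) then 1 else 0) - (if p.1 = (l,k) then 1 else 0) : ℤ) : ℝ) :=
      congrArg (fun t : ℤ => (t : ℝ)) E
    simp only [Int.cast_add, Int.cast_sub, Int.cast_natCast,
      apply_ite (fun t : ℤ => (t : ℝ)), Int.cast_one, Int.cast_zero] at E2
    show (x p : ℝ) + (if p.1 = (i, j) then 1 else 0) + (if p.1 = (j, i) then 1 else 0)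
        - (if p.1 = (k, l) then 1 else 0) - (if p.1 = (l, k) then 1 else 0)
        = (trCount 3 (M+1) wz p.1 : ℝ)
    rw [hx p]
    exact E2.symm
  have hyP : y ∈ P := by
    have hm : (fun p : {p : Fin 3 × Fin 3 // p.1 ≠ p.2} => (trCount 3 (M+1) wy p.1 : ℝ))
        ∈ Set.range (fun w : {w : Fin (M+1) → Fin 3 // NoLoop 3 (M+1) w} =>
          fun p : {p : Fin 3 × Fin 3 // p.1 ≠ p.2} => (trCount 3 (M+1) w.1 p.1 : ℝ)) :=
      ⟨⟨wy, hnly⟩, rfl⟩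
    rw [hyeq]
    exact subset_convexHull ℝ _ hm
  have hzP : z ∈ P := by
    have hm : (fun p : {p : Fin 3 × Fin 3 // p.1 ≠ p.2} => (trCount 3 (M+1) wz p.1 : ℝ))
        ∈ Set.range (fun w : {w : Fin (M+1) → Fin 3 // NoLoop 3 (M+1) w} =>
          fun p : {p : Fin 3 × Fin 3 // p.1 ≠ p.2} => (trCount 3 (M+1) w.1 p.1 : ℝ)) :=
      ⟨⟨wz, hnlz⟩, rfl⟩
    rw [hzeq]
    exact subset_convexHull ℝ _ hm
  have hhalf : ∀ p, (x p : ℝ) = (1 / 2) * y p + (1 / 2) * z p := by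
    intro p
    show (x p : ℝ) = (1 / 2) * ((x p : ℝ)
        + (if p.1 = (k, l) then 1 else 0) + (if p.1 = (l, k) then 1 else 0)
        - (if p.1 = (i, j) then 1 else 0) - (if p.1 = (j, i) then 1 else 0))
      + (1 / 2) * ((x p : ℝ)
        + (if p.1 = (i, j) then 1 else 0) + (if p.1 = (j, i) then 1 else 0)
        - (if p.1 = (k, l) then 1 else 0) - (if p.1 = (l, k) then 1 else 0))
    ring
  refine ⟨hyP, hzP, hhalf, ?_⟩
  intro hext
  obtain ⟨-, hprop⟩ := hext
  have hseg : (fun p => (x p : ℝ)) ∈ openSegment ℝ y z := by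
    refine ⟨1/2, 1/2, by norm_num, by norm_num, by norm_num, ?_⟩
    funext p
    have := hhalf p
    simp only [Pi.add_apply, Pi.smul_apply, smul_eq_mul]
    linarith
  have hy_eq := hprop hyP hzP hseg
  have h5 : (x ⟨(i,j), hij⟩ : ℝ)
      + (if ((i,j) : Fin 3 × Fin 3) = (k, l) then 1 else 0)
      + (if ((i,j) : Fin 3 × Fin 3) = (l, k) then 1 else 0)
      - (if ((i,j) : Fin 3 × Fin 3) = (i, j) then 1 else 0)
      - (if ((i,j) : Fin 3 × Fin 3) = (j, i) then 1 else 0)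
      = (x ⟨(i,j), hij⟩ : ℝ) := congrFun hy_eq ⟨(i,j), hij⟩
  have hne1 : ((i,j) : Fin 3 × Fin 3) ≠ (k, l) := fun h =>
    hdiff (Or.inl ⟨congrArg Prod.fst h, congrArg Prod.snd h⟩)
  have hne2 : ((i,j) : Fin 3 × Fin 3) ≠ (l, k) := fun h =>
    hdiff (Or.inr ⟨congrArg Prod.fst h, congrArg Prod.snd h⟩)
  have hne3 : ((i,j) : Fin 3 × Fin 3) ≠ (j, i) := fun h =>
    hij (congrArg Prod.fst h)
  rw [if_neg hne1, if_neg hne2, if_pos rfl, if_neg hne3] at h5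
  linarith
end

section
/- Let p = ⌊(T−1)/2⌋ and for 0 ≤ 2t ≤ T−1 define f(t) = ⌊(T−1−2t)/3⌋. For S = 3 and T ≥ 13, every transition-count vector x of a word in [3]^T_{NL} whose state graph has exactly q two-cycles, all of one type, with 3 ≤ q ≤ p−3, satisfies: x is a midpoint x = ½y + ½z of two other points y, z in the polytope conv{A_w : w ∈ [3]^T_{NL}} (obtained by trading two 3-cycles for three 2-cycles and vice versa), hence x is not a vertex of the polytope. -/
/-- Count of adjacent pairs `(a,b)` in a list. -/
def pc : List (Fin 3) → Fin 3 → Fin 3 → ℕ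
  | x :: y :: l, a, b => (if x = a ∧ y = b then 1 else 0) + pc (y :: l) a b
  | _, _, _ => 0

lemma pc_nil (a b : Fin 3) : pc [] a b = 0 := rfl
lemma pc_single (x a b : Fin 3) : pc [x] a b = 0 := rfl

lemma pc_cons {L : List (Fin 3)} {x : Fin 3} (hL : L.head? = some x) (u a b : Fin 3) :
    pc (u :: L) a b = (if u = a ∧ x = b then 1 else 0) + pc L a b := by
  cases L with
  | nil => simp at hL
  | cons y t => simp only [List.head?_cons, Option.some_inj] at hL; subst hL; rfl

/-- `n` copies of the 2-cycle `x y`. -/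
def c2 (x y : Fin 3) : ℕ → List (Fin 3)
  | 0 => []
  | n + 1 => x :: y :: c2 x y n

/-- `n` copies of the 3-cycle `x y z`. -/
def c3 (x y z : Fin 3) : ℕ → List (Fin 3)
  | 0 => []
  | n + 1 => x :: y :: z :: c3 x y z n

lemma length_c2 (x y : Fin 3) (n : ℕ) : (c2 x y n).length = 2 * n := by
  induction n with
  | zero => rfl
  | succ n ih => simp [c2, ih]; omega

lemma length_c3 (x y z : Fin 3) (n : ℕ) : (c3 x y z n).length = 3 * n := by
  induction n with
  | zero => rfl
  | succ n ih => simp [c3, ih]; omega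

lemma head?_c2_append {L : List (Fin 3)} {x : Fin 3} (y : Fin 3) (n : ℕ)
    (hL : L.head? = some x) : (c2 x y n ++ L).head? = some x := by
  cases n with
  | zero => simpa [c2] using hL
  | succ n => simp [c2]

lemma head?_c3_append {L : List (Fin 3)} {x : Fin 3} (y z : Fin 3) (n : ℕ)
    (hL : L.head? = some x) : (c3 x y z n ++ L).head? = some x := by
  cases n with
  | zero => simpa [c3] using hL
  | succ n => simp [c3]

lemma pc_c2_append {L : List (Fin 3)} {x : Fin 3} (y : Fin 3) (n : ℕ)
    (hL : L.head? = some x) (a b : Fin 3) :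
    pc (c2 x y n ++ L) a b =
      n * (if x = a ∧ y = b then 1 else 0) + n * (if y = a ∧ x = b then 1 else 0)
      + pc L a b := by
  induction n with
  | zero => simp [c2]
  | succ n ih =>
    have h1 : (c2 x y n ++ L).head? = some x := head?_c2_append y n hL
    have : pc (c2 x y (n+1) ++ L) a b
        = (if x = a ∧ y = b then 1 else 0) + ((if y = a ∧ x = b then 1 else 0)
          + pc (c2 x y n ++ L) a b) := by
      show pc (x :: y :: (c2 x y n ++ L)) a b = _
      rw [pc_cons (by simp : (y :: (c2 x y n ++ L)).head? = some y),
          pc_cons h1]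
    rw [this, ih]; ring

lemma pc_c3_append {L : List (Fin 3)} {x : Fin 3} (y z : Fin 3) (n : ℕ)
    (hL : L.head? = some x) (a b : Fin 3) :
    pc (c3 x y z n ++ L) a b =
      n * (if x = a ∧ y = b then 1 else 0) + n * (if y = a ∧ z = b then 1 else 0)
      + n * (if z = a ∧ x = b then 1 else 0) + pc L a b := by
  induction n with
  | zero => simp [c3]
  | succ n ih =>
    have h1 : (c3 x y z n ++ L).head? = some x := head?_c3_append y z n hL
    have : pc (c3 x y z (n+1) ++ L) a b
        = (if x = a ∧ y = b then 1 else 0) + ((if y = a ∧ z = b then 1 else 0)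
          + ((if z = a ∧ x = b then 1 else 0) + pc (c3 x y z n ++ L) a b)) := by
      show pc (x :: y :: z :: (c3 x y z n ++ L)) a b = _
      rw [pc_cons (by simp : (y :: z :: (c3 x y z n ++ L)).head? = some y),
          pc_cons (by simp : (z :: (c3 x y z n ++ L)).head? = some z),
          pc_cons h1]
    rw [this, ih]; ring

lemma chain'_c2_append {L : List (Fin 3)} {x y : Fin 3} (hxy : x ≠ y) (n : ℕ)
    (hL : L.head? = some x) (hC : List.Chain' (· ≠ ·) L) :
    List.Chain' (· ≠ ·) (c2 x y n ++ L) := by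
  induction n with
  | zero => simpa [c2]
  | succ n ih =>
    show List.Chain' (· ≠ ·) (x :: y :: (c2 x y n ++ L))
    rw [List.Chain', List.isChain_cons, List.isChain_cons]
    refine ⟨?_, ⟨?_, ih⟩⟩
    · simp [hxy]
    · intro b hb
      rw [head?_c2_append y n hL] at hb
      simp only [Option.mem_def, Option.some_inj] at hb
      subst hb; exact hxy.symm

lemma chain'_c3_append {L : List (Fin 3)} {x y z : Fin 3} (hxy : x ≠ y) (hyz : y ≠ z)
    (hzx : z ≠ x) (n : ℕ) (hL : L.head? = some x) (hC : List.Chain' (· ≠ ·) L) :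
    List.Chain' (· ≠ ·) (c3 x y z n ++ L) := by
  induction n with
  | zero => simpa [c3]
  | succ n ih =>
    show List.Chain' (· ≠ ·) (x :: y :: z :: (c3 x y z n ++ L))
    rw [List.Chain', List.isChain_cons, List.isChain_cons, List.isChain_cons]
    refine ⟨by simp [hxy], by simp [hyz], ?_, ih⟩
    intro b hb
    rw [head?_c3_append y z n hL] at hb
    simp only [Option.mem_def, Option.some_inj] at hb
    subst hb; exact hzx

lemma pc_eq_sum (l : List (Fin 3)) (a b : Fin 3) :
    pc l a b = ∑ t ∈ Finset.range (l.length - 1),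
      (if l.getD t 0 = a ∧ l.getD (t+1) 0 = b then 1 else 0) := by
  induction l with
  | nil => simp [pc]
  | cons x t ih =>
    cases t with
    | nil => simp [pc]
    | cons y s =>
      have hlen : (x :: y :: s).length - 1 = (s.length + 1) := by simp
      rw [hlen, Finset.sum_range_succ']
      have : ∀ k, ((x :: y :: s).getD (k+1) 0 = a ∧ (x :: y :: s).getD (k+1+1) 0 = b)
          = ((y :: s).getD k 0 = a ∧ (y :: s).getD (k+1) 0 = b) := by
        intro k; simp [List.getD_cons_succ]
      have hs : (y :: s).length - 1 = s.length := by simp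
      show (if x = a ∧ y = b then 1 else 0) + pc (y :: s) a b = _
      rw [ih, hs]
      simp only [this, List.getD_cons_succ, List.getD_cons_zero]
      omega

lemma trCount_eq_pc (T : ℕ) (w : Fin T → Fin 3) (a b : Fin 3) :
    trCount 3 T w (a, b) = pc (List.ofFn w) a b := by
  rw [trCount, Finset.card_filter, pc_eq_sum]
  have hlen : (List.ofFn w).length = T := List.length_ofFn
  rw [hlen]
  rw [← Fin.sum_univ_eq_sum_range (fun t =>
    (if (List.ofFn w).getD t 0 = a ∧ (List.ofFn w).getD (t+1) 0 = b then 1 else 0)) (T-1)]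
  apply Finset.sum_congr rfl
  intro t _
  congr 1
  have h1 : t.1 < T := by have := t.2; omega
  have h2 : t.1 + 1 < T := by have := t.2; omega
  have e1 : (List.ofFn w).getD t.1 0 = w ⟨t.1, h1⟩ := by
    rw [List.getD_eq_getElem _ _ (by omega : t.1 < (List.ofFn w).length)]
    simp
  have e2 : (List.ofFn w).getD (t.1+1) 0 = w ⟨t.1+1, h2⟩ := by
    rw [List.getD_eq_getElem _ _ (by omega : t.1+1 < (List.ofFn w).length)]
    simp
  rw [e1, e2]

lemma noLoop_iff_chain' (T : ℕ) (w : Fin T → Fin 3) :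
    NoLoop 3 T w ↔ List.Chain' (· ≠ ·) (List.ofFn w) := by
  rw [List.Chain', List.isChain_iff_getElem]
  constructor
  · intro h t ht
    have hlen : (List.ofFn w).length = T := List.length_ofFn
    have ht' : t < T - 1 := by omega
    have := h ⟨t, ht'⟩
    simpa [List.get_ofFn] using this
  · intro h t
    have hlen : (List.ofFn w).length = T := List.length_ofFn
    have ht : t.1 + 1 < (List.ofFn w).length := by have := t.2; omega
    have := h t.1 ht
    simpa [List.get_ofFn] using this

lemma pc_diag (l : List (Fin 3)) (hC : List.Chain' (· ≠ ·) l) (v : Fin 3) :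
    pc l v v = 0 := by
  induction l with
  | nil => rfl
  | cons x t ih =>
    cases t with
    | nil => rfl
    | cons y s =>
      have hxy : x ≠ y := (List.isChain_cons_cons.mp hC).1
      have := ih (List.isChain_cons_cons.mp hC).2
      show (if x = v ∧ y = v then 1 else 0) + pc (y :: s) v v = 0
      rw [this]
      have : ¬(x = v ∧ y = v) := by rintro ⟨rfl, rfl⟩; exact hxy rfl
      simp [this]

lemma pc_flow (l : List (Fin 3)) (v : Fin 3) :
    (∑ b : Fin 3, pc l v b) + (if l.getLast? = some v then 1 else 0) =
    (∑ b : Fin 3, pc l b v) + (if l.head? = some v then 1 else 0) := by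
  induction l with
  | nil => simp [pc]
  | cons x t ih =>
    cases t with
    | nil =>
      simp [pc_single, pc]
    | cons y s =>
      have hout : ∀ b, pc (x :: y :: s) v b
          = (if x = v ∧ y = b then 1 else 0) + pc (y :: s) v b := fun b => rfl
      have hin : ∀ b, pc (x :: y :: s) b v
          = (if x = b ∧ y = v then 1 else 0) + pc (y :: s) b v := fun b => rfl
      have e1 : (∑ b : Fin 3, (if x = v ∧ y = b then 1 else 0)) = (if x = v then 1 else 0) := by
        rw [Finset.sum_congr rfl (fun b _ => by
          rw [show (if x = v ∧ y = b then 1 else 0) = (if y = b then (if x = v then 1 else 0) else 0) from by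
            by_cases h1 : x = v <;> by_cases h2 : y = b <;> simp [h1, h2]])]
        rw [Finset.sum_ite_eq Finset.univ y (fun _ => if x = v then 1 else 0)]
        simp
      have e2 : (∑ b : Fin 3, (if x = b ∧ y = v then 1 else 0)) = (if y = v then 1 else 0) := by
        rw [Finset.sum_congr rfl (fun b _ => by
          rw [show (if x = b ∧ y = v then 1 else 0) = (if x = b then (if y = v then 1 else 0) else 0) from by
            by_cases h1 : x = b <;> by_cases h2 : y = v <;> simp [h1, h2]])]
        rw [Finset.sum_ite_eq Finset.univ x (fun _ => if y = v then 1 else 0)]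
        simp
      simp only [hout, hin, Finset.sum_add_distrib, e1, e2,
        List.getLast?_cons_cons, List.head?_cons]
      have hh : (y :: s).head? = some y := rfl
      rw [hh] at ih
      simp only [Option.some.injEq] at ih ⊢
      by_cases h1 : x = v <;> by_cases h2 : y = v <;>
        by_cases h3 : (y :: s).getLast? = some v <;>
        simp only [h1, h2, h3, if_true, if_false, if_pos, if_neg, not_false_iff] at ih ⊢ <;>
        omega

lemma pc_total (l : List (Fin 3)) :
    (∑ p : Fin 3 × Fin 3, pc l p.1 p.2) = l.length - 1 := by
  induction l with
  | nil => simp [pc]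
  | cons x t ih =>
    cases t with
    | nil => simp [pc_single]
    | cons y s =>
      have hout : ∀ p : Fin 3 × Fin 3, pc (x :: y :: s) p.1 p.2
          = (if x = p.1 ∧ y = p.2 then 1 else 0) + pc (y :: s) p.1 p.2 := fun p => rfl
      simp only [hout, Finset.sum_add_distrib, ih]
      have : (∑ p : Fin 3 × Fin 3, if x = p.1 ∧ y = p.2 then (1:ℕ) else 0) = 1 := by
        rw [Finset.sum_congr rfl (fun p _ => by
          rw [show (if x = p.1 ∧ y = p.2 then (1:ℕ) else 0) = (if (x,y) = p then 1 else 0) from by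
            by_cases h : (x,y) = p
            · simp [← h]
            · have : ¬(x = p.1 ∧ y = p.2) := by
                rintro ⟨h1, h2⟩; exact h (Prod.ext h1 h2)
              simp [h, this]])]
        rw [Finset.sum_ite_eq Finset.univ (x,y) (fun _ => (1:ℕ))]
        simp
      rw [this]
      simp only [List.length_cons]
      omega

lemma sum3 {M : Type*} [AddCommMonoid M] (i j k : Fin 3) (hij : i ≠ j) (hik : i ≠ k)
    (hjk : j ≠ k) (g : Fin 3 → M) : (∑ v : Fin 3, g v) = g i + g j + g k := by
  have hcov : ∀ v : Fin 3, v = i ∨ v = j ∨ v = k := by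
    have : ∀ i j k v : Fin 3, i ≠ j → i ≠ k → j ≠ k → (v = i ∨ v = j ∨ v = k) := by decide
    exact fun v => this i j k v hij hik hjk
  have : (Finset.univ : Finset (Fin 3)) = {i, j, k} := by
    ext v; simp only [Finset.mem_univ, Finset.mem_insert, Finset.mem_singleton, true_iff]
    exact hcov v
  rw [this, Finset.sum_insert (by simp [hij, hik]), Finset.sum_insert (by simp [hjk]),
    Finset.sum_singleton, add_assoc]

lemma cover3 (i j k : Fin 3) (hij : i ≠ j) (hik : i ≠ k) (hjk : j ≠ k) :
    ∀ v : Fin 3, v = i ∨ v = j ∨ v = k := by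
  have : ∀ i j k v : Fin 3, i ≠ j → i ≠ k → j ≠ k → (v = i ∨ v = j ∨ v = k) := by decide
  exact fun v => this i j k v hij hik hjk

lemma realize (i j k : Fin 3) (hij : i ≠ j) (hik : i ≠ k) (hjk : j ≠ k)
    (A B M M' : ℕ)
    (hpat : (M' = M ∧ A = B + M) ∨ (M' = M ∧ A = B + M + 1) ∨ (M' = M ∧ A + 1 = B + M)
      ∨ (M' = M + 1 ∧ A = B + M) ∨ (M' = M + 1 ∧ A = B + M + 1)
      ∨ (M = M' + 1 ∧ A = B + M) ∨ (M = M' + 1 ∧ A + 1 = B + M)) :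
    ∃ l : List (Fin 3), l.length = A + B + M + M' + 1 ∧ List.Chain' (· ≠ ·) l ∧
      pc l i j = A ∧ pc l j i = B ∧ pc l j k = M ∧ pc l k i = M' ∧
      pc l i k = 0 ∧ pc l k j = 0 := by
  have hji : j ≠ i := hij.symm
  have hki : k ≠ i := hik.symm
  have hkj : k ≠ j := hjk.symm
  rcases hpat with ⟨hM, hA⟩ | ⟨hM, hA⟩ | ⟨hM, hA⟩ | ⟨hM, hA⟩ | ⟨hM, hA⟩ | ⟨hM, hA⟩ | ⟨hM, hA⟩
  · -- P0 : c3 i j k M ++ (c2 i j B ++ [i])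
    refine ⟨c3 i j k M ++ (c2 i j B ++ [i]), ?_, ?_, ?_, ?_, ?_, ?_, ?_, ?_⟩
    · simp [length_c3, length_c2]; omega
    · exact chain'_c3_append hij hjk hki M
        (head?_c2_append j B (rfl : ([i] : List (Fin 3)).head? = some i))
        (chain'_c2_append hij B (rfl : ([i] : List (Fin 3)).head? = some i) (by simp [List.Chain']))
    all_goals {
      rw [pc_c3_append j k M (head?_c2_append j B (rfl : ([i] : List (Fin 3)).head? = some i)),
          pc_c2_append j B (rfl : ([i] : List (Fin 3)).head? = some i),
          pc_single]
      simp only [hij, hik, hjk, hji, hki, hkj, and_true, and_false, true_and, false_and,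
        if_true, if_false, eq_self_iff_true, ite_true, ite_false, ne_eq, mul_one, mul_zero]
      omega }
  · -- P1 : c3 i j k M ++ (c2 i j B ++ [i, j])
    have htail : ([i, j] : List (Fin 3)).head? = some i := rfl
    refine ⟨c3 i j k M ++ (c2 i j B ++ [i, j]), ?_, ?_, ?_, ?_, ?_, ?_, ?_, ?_⟩
    · simp [length_c3, length_c2]; omega
    · exact chain'_c3_append hij hjk hki M (head?_c2_append j B htail)
        (chain'_c2_append hij B htail (by simp [List.Chain', hij]))
    all_goals {
      rw [pc_c3_append j k M (head?_c2_append j B htail),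
          pc_c2_append j B htail,
          pc_cons (rfl : ([j] : List (Fin 3)).head? = some j), pc_single]
      simp only [hij, hik, hjk, hji, hki, hkj, and_true, and_false, true_and, false_and,
        if_true, if_false, eq_self_iff_true, ite_true, ite_false, mul_one, mul_zero]
      omega }
  · -- P2
    rcases B with _ | B'
    · -- B = 0 : c3 j k i M'' ++ [j, k, i] with M = M'' + 1
      rcases M with _ | M''
      · omega
      have htail : ([j, k, i] : List (Fin 3)).head? = some j := rfl
      refine ⟨c3 j k i M'' ++ [j, k, i], ?_, ?_, ?_, ?_, ?_, ?_, ?_, ?_⟩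
      · simp [length_c3]; omega
      · exact chain'_c3_append hjk hki hij M'' htail (by simp [List.Chain', hjk, hki])
      all_goals {
        rw [pc_c3_append k i M'' htail,
            pc_cons (rfl : ([k, i] : List (Fin 3)).head? = some k),
            pc_cons (rfl : ([i] : List (Fin 3)).head? = some i), pc_single]
        simp only [hij, hik, hjk, hji, hki, hkj, and_true, and_false, true_and, false_and,
          if_true, if_false, eq_self_iff_true, ite_true, ite_false, mul_one, mul_zero]
        omega }
    · -- B = B' + 1 : c3 j k i M ++ (c2 j i B' ++ [j, i])
      have htail : ([j, i] : List (Fin 3)).head? = some j := rfl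
      refine ⟨c3 j k i M ++ (c2 j i B' ++ [j, i]), ?_, ?_, ?_, ?_, ?_, ?_, ?_, ?_⟩
      · simp [length_c3, length_c2]; omega
      · exact chain'_c3_append hjk hki hij M (head?_c2_append i B' htail)
          (chain'_c2_append hji B' htail (by simp [List.Chain', hji]))
      all_goals {
        rw [pc_c3_append k i M (head?_c2_append i B' htail),
            pc_c2_append i B' htail,
            pc_cons (rfl : ([i] : List (Fin 3)).head? = some i), pc_single]
        simp only [hij, hik, hjk, hji, hki, hkj, and_true, and_false, true_and, false_and,
          if_true, if_false, eq_self_iff_true, ite_true, ite_false, mul_one, mul_zero]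
        omega }
  · -- P3 : k :: (c3 i j k M ++ (c2 i j B ++ [i]))
    have htail : ([i] : List (Fin 3)).head? = some i := rfl
    have hhead : (c3 i j k M ++ (c2 i j B ++ [i])).head? = some i :=
      head?_c3_append j k M (head?_c2_append j B htail)
    refine ⟨k :: (c3 i j k M ++ (c2 i j B ++ [i])), ?_, ?_, ?_, ?_, ?_, ?_, ?_, ?_⟩
    · simp [length_c3, length_c2]; omega
    · rw [List.Chain', List.isChain_cons]
      refine ⟨?_, chain'_c3_append hij hjk hki M (head?_c2_append j B htail)
        (chain'_c2_append hij B htail (by simp [List.Chain']))⟩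
      intro y hy; rw [hhead] at hy
      simp only [Option.mem_def, Option.some_inj] at hy; subst hy; exact hki
    all_goals {
      rw [pc_cons hhead,
          pc_c3_append j k M (head?_c2_append j B htail),
          pc_c2_append j B htail, pc_single]
      simp only [hij, hik, hjk, hji, hki, hkj, and_true, and_false, true_and, false_and,
        if_true, if_false, eq_self_iff_true, ite_true, ite_false, mul_one, mul_zero]
      omega }
  · -- P4 : k :: (c3 i j k M ++ (c2 i j B ++ [i, j]))
    have htail : ([i, j] : List (Fin 3)).head? = some i := rfl
    have hhead : (c3 i j k M ++ (c2 i j B ++ [i, j])).head? = some i :=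
      head?_c3_append j k M (head?_c2_append j B htail)
    refine ⟨k :: (c3 i j k M ++ (c2 i j B ++ [i, j])), ?_, ?_, ?_, ?_, ?_, ?_, ?_, ?_⟩
    · simp [length_c3, length_c2]; omega
    · rw [List.Chain', List.isChain_cons]
      refine ⟨?_, chain'_c3_append hij hjk hki M (head?_c2_append j B htail)
        (chain'_c2_append hij B htail (by simp [List.Chain', hij]))⟩
      intro y hy; rw [hhead] at hy
      simp only [Option.mem_def, Option.some_inj] at hy; subst hy; exact hki
    all_goals {
      rw [pc_cons hhead,
          pc_c3_append j k M (head?_c2_append j B htail),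
          pc_c2_append j B htail,
          pc_cons (rfl : ([j] : List (Fin 3)).head? = some j), pc_single]
      simp only [hij, hik, hjk, hji, hki, hkj, and_true, and_false, true_and, false_and,
        if_true, if_false, eq_self_iff_true, ite_true, ite_false, mul_one, mul_zero]
      omega }
  · -- P5 : c2 i j B ++ (c3 i j k M'' ++ [i, j, k]) with M = M'' + 1
    rcases M with _ | M''
    · omega
    have htail : ([i, j, k] : List (Fin 3)).head? = some i := rfl
    refine ⟨c2 i j B ++ (c3 i j k M'' ++ [i, j, k]), ?_, ?_, ?_, ?_, ?_, ?_, ?_, ?_⟩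
    · simp [length_c3, length_c2]; omega
    · exact chain'_c2_append hij B (head?_c3_append j k M'' htail)
        (chain'_c3_append hij hjk hki M'' htail (by simp [List.Chain', hij, hjk]))
    all_goals {
      rw [pc_c2_append j B (head?_c3_append j k M'' htail),
          pc_c3_append j k M'' htail,
          pc_cons (rfl : ([j, k] : List (Fin 3)).head? = some j),
          pc_cons (rfl : ([k] : List (Fin 3)).head? = some k), pc_single]
      simp only [hij, hik, hjk, hji, hki, hkj, and_true, and_false, true_and, false_and,
        if_true, if_false, eq_self_iff_true, ite_true, ite_false, mul_one, mul_zero]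
      omega }
  · -- P6 : c2 j i B ++ (c3 j k i M'' ++ [j, k]) with M = M'' + 1
    rcases M with _ | M''
    · omega
    have htail : ([j, k] : List (Fin 3)).head? = some j := rfl
    refine ⟨c2 j i B ++ (c3 j k i M'' ++ [j, k]), ?_, ?_, ?_, ?_, ?_, ?_, ?_, ?_⟩
    · simp [length_c3, length_c2]; omega
    · exact chain'_c2_append hji B (head?_c3_append k i M'' htail)
        (chain'_c3_append hjk hki hij M'' htail (by simp [List.Chain', hjk]))
    all_goals {
      rw [pc_c2_append i B (head?_c3_append k i M'' htail),
          pc_c3_append k i M'' htail,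
          pc_cons (rfl : ([k] : List (Fin 3)).head? = some k), pc_single]
      simp only [hij, hik, hjk, hji, hki, hkj, and_true, and_false, true_and, false_and,
        if_true, if_false, eq_self_iff_true, ite_true, ite_false, mul_one, mul_zero]
      omega }

lemma word_of_list (T : ℕ) (l : List (Fin 3)) (hlen : l.length = T)
    (hC : List.Chain' (· ≠ ·) l) :
    ∃ w : Fin T → Fin 3, NoLoop 3 T w ∧ ∀ a b : Fin 3, trCount 3 T w (a, b) = pc l a b := by
  subst hlen
  refine ⟨l.get, ?_, ?_⟩
  · rw [noLoop_iff_chain', List.ofFn_get]; exact hC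
  · intro a b; rw [trCount_eq_pc, List.ofFn_get]

set_option maxHeartbeats 2000000 in
lemma build (T : ℕ) (hT : 1 ≤ T) (i j k : Fin 3) (hij : i ≠ j) (hik : i ≠ k) (hjk : j ≠ k)
    (u : Fin T → Fin 3) (a b m m' : ℕ)
    (hA : trCount 3 T u (i, j) = a) (hB : trCount 3 T u (j, i) = b)
    (hM : trCount 3 T u (j, k) = m) (hM' : trCount 3 T u (k, i) = m')
    (h0 : trCount 3 T u (i, k) = 0) (h0' : trCount 3 T u (k, j) = 0)
    (htot : a + b + m + m' = T - 1)
    (ha : 1 ≤ a) (hb : 3 ≤ b) (hm : 2 ≤ m) (hm' : 2 ≤ m')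
    (hpat : (m' = m ∧ a = b + m) ∨ (m' = m ∧ a = b + m + 1) ∨ (m' = m ∧ a + 1 = b + m)
      ∨ (m' = m + 1 ∧ a = b + m) ∨ (m' = m + 1 ∧ a = b + m + 1)
      ∨ (m = m' + 1 ∧ a = b + m) ∨ (m = m' + 1 ∧ a + 1 = b + m)) :
    ∃ w₁ w₂ : Fin T → Fin 3, NoLoop 3 T w₁ ∧ NoLoop 3 T w₂ ∧
      trCount 3 T w₁ (j, i) = b + 3 ∧ trCount 3 T w₂ (j, i) + 3 = b ∧
      ∀ s t : Fin 3, s ≠ t → (trCount 3 T u (s, t) : ℝ) =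
        (1/2) * trCount 3 T w₁ (s, t) + (1/2) * trCount 3 T w₂ (s, t) := by
  obtain ⟨a₁, rfl⟩ : ∃ a₁, a = a₁ + 1 := ⟨a - 1, by omega⟩
  obtain ⟨b₃, rfl⟩ : ∃ b₃, b = b₃ + 3 := ⟨b - 3, by omega⟩
  obtain ⟨m₂, rfl⟩ : ∃ m₂, m = m₂ + 2 := ⟨m - 2, by omega⟩
  obtain ⟨n₂, rfl⟩ : ∃ n₂, m' = n₂ + 2 := ⟨m' - 2, by omega⟩
  have hp1 : (n₂ = m₂ ∧ a₁ + 2 = (b₃ + 6) + m₂) ∨ (n₂ = m₂ ∧ a₁ + 2 = (b₃ + 6) + m₂ + 1)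
      ∨ (n₂ = m₂ ∧ (a₁ + 2) + 1 = (b₃ + 6) + m₂)
      ∨ (n₂ = m₂ + 1 ∧ a₁ + 2 = (b₃ + 6) + m₂) ∨ (n₂ = m₂ + 1 ∧ a₁ + 2 = (b₃ + 6) + m₂ + 1)
      ∨ (m₂ = n₂ + 1 ∧ a₁ + 2 = (b₃ + 6) + m₂)
      ∨ (m₂ = n₂ + 1 ∧ (a₁ + 2) + 1 = (b₃ + 6) + m₂) := by
    rcases hpat with ⟨h1, h2⟩ | ⟨h1, h2⟩ | ⟨h1, h2⟩ | ⟨h1, h2⟩ | ⟨h1, h2⟩ | ⟨h1, h2⟩ | ⟨h1, h2⟩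
    · exact Or.inl ⟨by omega, by omega⟩
    · exact Or.inr (Or.inl ⟨by omega, by omega⟩)
    · exact Or.inr (Or.inr (Or.inl ⟨by omega, by omega⟩))
    · exact Or.inr (Or.inr (Or.inr (Or.inl ⟨by omega, by omega⟩)))
    · exact Or.inr (Or.inr (Or.inr (Or.inr (Or.inl ⟨by omega, by omega⟩))))
    · exact Or.inr (Or.inr (Or.inr (Or.inr (Or.inr (Or.inl ⟨by omega, by omega⟩)))))
    · exact Or.inr (Or.inr (Or.inr (Or.inr (Or.inr (Or.inr ⟨by omega, by omega⟩)))))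
  have hp2 : (n₂ + 4 = m₂ + 4 ∧ a₁ = b₃ + (m₂ + 4)) ∨ (n₂ + 4 = m₂ + 4 ∧ a₁ = b₃ + (m₂ + 4) + 1)
      ∨ (n₂ + 4 = m₂ + 4 ∧ a₁ + 1 = b₃ + (m₂ + 4))
      ∨ (n₂ + 4 = (m₂ + 4) + 1 ∧ a₁ = b₃ + (m₂ + 4)) ∨ (n₂ + 4 = (m₂ + 4) + 1 ∧ a₁ = b₃ + (m₂ + 4) + 1)
      ∨ (m₂ + 4 = (n₂ + 4) + 1 ∧ a₁ = b₃ + (m₂ + 4))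
      ∨ (m₂ + 4 = (n₂ + 4) + 1 ∧ a₁ + 1 = b₃ + (m₂ + 4)) := by
    rcases hpat with ⟨h1, h2⟩ | ⟨h1, h2⟩ | ⟨h1, h2⟩ | ⟨h1, h2⟩ | ⟨h1, h2⟩ | ⟨h1, h2⟩ | ⟨h1, h2⟩
    · exact Or.inl ⟨by omega, by omega⟩
    · exact Or.inr (Or.inl ⟨by omega, by omega⟩)
    · exact Or.inr (Or.inr (Or.inl ⟨by omega, by omega⟩))
    · exact Or.inr (Or.inr (Or.inr (Or.inl ⟨by omega, by omega⟩)))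
    · exact Or.inr (Or.inr (Or.inr (Or.inr (Or.inl ⟨by omega, by omega⟩))))
    · exact Or.inr (Or.inr (Or.inr (Or.inr (Or.inr (Or.inl ⟨by omega, by omega⟩)))))
    · exact Or.inr (Or.inr (Or.inr (Or.inr (Or.inr (Or.inr ⟨by omega, by omega⟩)))))
  obtain ⟨l₁, hlen₁, hC₁, e₁A, e₁B, e₁M, e₁M', e₁z1, e₁z2⟩ :=
    realize i j k hij hik hjk (a₁ + 2) (b₃ + 6) m₂ n₂ hp1
  obtain ⟨l₂, hlen₂, hC₂, e₂A, e₂B, e₂M, e₂M', e₂z1, e₂z2⟩ :=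
    realize i j k hij hik hjk a₁ b₃ (m₂ + 4) (n₂ + 4) hp2
  clear hpat hp1 hp2
  obtain ⟨w₁, hw₁, hwc₁⟩ := word_of_list T l₁ (by omega) hC₁
  obtain ⟨w₂, hw₂, hwc₂⟩ := word_of_list T l₂ (by omega) hC₂
  refine ⟨w₁, w₂, hw₁, hw₂, by rw [hwc₁, e₁B], by rw [hwc₂, e₂B], ?_⟩
  intro s t hst
  have hs := cover3 i j k hij hik hjk s
  have ht := cover3 i j k hij hik hjk t
  rcases hs with rfl | rfl | rfl <;> rcases ht with rfl | rfl | rfl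
  · exact absurd rfl hst
  · rw [hwc₁, hwc₂, hA, e₁A, e₂A]; push_cast; ring
  · rw [hwc₁, hwc₂, h0, e₁z1, e₂z1]; push_cast; ring
  · rw [hwc₁, hwc₂, hB, e₁B, e₂B]; push_cast; ring
  · exact absurd rfl hst
  · rw [hwc₁, hwc₂, hM, e₁M, e₂M]; push_cast; ring
  · rw [hwc₁, hwc₂, hM', e₁M', e₂M']; push_cast; ring
  · rw [hwc₁, hwc₂, h0', e₁z2, e₂z2]; push_cast; ring
  · exact absurd rfl hst

lemma arith (T q ca cb cc cc' cd cd' ei ej ek fi fj fk : ℕ)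
    (hT : 13 ≤ T) (hq3 : 3 ≤ q) (hqp : q ≤ (T - 1) / 2 - 3)
    (he : ei + ej + ek = 1) (hf : fi + fj + fk = 1)
    (h1 : ca + cc + fi = cb + cc' + ei)
    (h2 : cb + cd + fj = ca + cd' + ej)
    (h3 : cc' + cd' + fk = cc + cd + ek)
    (hmin1 : min ca cb = q) (hmin2 : min cc cc' = 0) (hmin3 : min cd cd' = 0)
    (htot : ca + cb + cc + cc' + cd + cd' = T - 1) :
    (cc = 0 ∧ cd' = 0 ∧ cb = q ∧ 1 ≤ ca ∧ 3 ≤ cb ∧ 2 ≤ cd ∧ 2 ≤ cc' ∧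
      ca + cb + cd + cc' = T - 1 ∧
      ((cc' = cd ∧ ca = cb + cd) ∨ (cc' = cd ∧ ca = cb + cd + 1) ∨ (cc' = cd ∧ ca + 1 = cb + cd)
      ∨ (cc' = cd + 1 ∧ ca = cb + cd) ∨ (cc' = cd + 1 ∧ ca = cb + cd + 1)
      ∨ (cd = cc' + 1 ∧ ca = cb + cd) ∨ (cd = cc' + 1 ∧ ca + 1 = cb + cd)))
    ∨ (cd = 0 ∧ cc' = 0 ∧ ca = q ∧ 1 ≤ cb ∧ 3 ≤ ca ∧ 2 ≤ cc ∧ 2 ≤ cd' ∧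
      cb + ca + cc + cd' = T - 1 ∧
      ((cd' = cc ∧ cb = ca + cc) ∨ (cd' = cc ∧ cb = ca + cc + 1) ∨ (cd' = cc ∧ cb + 1 = ca + cc)
      ∨ (cd' = cc + 1 ∧ cb = ca + cc) ∨ (cd' = cc + 1 ∧ cb = ca + cc + 1)
      ∨ (cc = cd' + 1 ∧ cb = ca + cc) ∨ (cc = cd' + 1 ∧ cb + 1 = ca + cc))) := by
  have hcase1 : cc = 0 ∨ cc' = 0 := by omega
  have hcase2 : cd = 0 ∨ cd' = 0 := by omega
  rcases hcase1 with h4 | h4 <;> rcases hcase2 with h5 | h5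
  · exfalso; omega
  · -- cc = 0, cd' = 0 : orientation 1
    left
    have hx : ca = cb + cd ∨ ca = cb + cd + 1 ∨ ca + 1 = cb + cd := by omega
    have hy : cc' = cd ∨ cc' = cd + 1 ∨ cd = cc' + 1 := by omega
    refine ⟨h4, h5, by omega, by omega, by omega, by omega, by omega, by omega, ?_⟩
    rcases hy with hy | hy | hy <;> rcases hx with hx | hx | hx
    · exact Or.inl ⟨hy, hx⟩
    · exact Or.inr (Or.inl ⟨hy, hx⟩)
    · exact Or.inr (Or.inr (Or.inl ⟨hy, hx⟩))
    · exact Or.inr (Or.inr (Or.inr (Or.inl ⟨hy, hx⟩)))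
    · exact Or.inr (Or.inr (Or.inr (Or.inr (Or.inl ⟨hy, hx⟩))))
    · exfalso; omega
    · exact Or.inr (Or.inr (Or.inr (Or.inr (Or.inr (Or.inl ⟨hy, hx⟩)))))
    · exfalso; omega
    · exact Or.inr (Or.inr (Or.inr (Or.inr (Or.inr (Or.inr ⟨hy, hx⟩)))))
  · -- cd = 0, cc' = 0 : orientation 2
    right
    have hx : cb = ca + cc ∨ cb = ca + cc + 1 ∨ cb + 1 = ca + cc := by omega
    have hy : cd' = cc ∨ cd' = cc + 1 ∨ cc = cd' + 1 := by omega
    refine ⟨h5, h4, by omega, by omega, by omega, by omega, by omega, by omega, ?_⟩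
    rcases hy with hy | hy | hy <;> rcases hx with hx | hx | hx
    · exact Or.inl ⟨hy, hx⟩
    · exact Or.inr (Or.inl ⟨hy, hx⟩)
    · exact Or.inr (Or.inr (Or.inl ⟨hy, hx⟩))
    · exact Or.inr (Or.inr (Or.inr (Or.inl ⟨hy, hx⟩)))
    · exact Or.inr (Or.inr (Or.inr (Or.inr (Or.inl ⟨hy, hx⟩))))
    · exfalso; omega
    · exact Or.inr (Or.inr (Or.inr (Or.inr (Or.inr (Or.inl ⟨hy, hx⟩)))))
    · exfalso; omega
    · exact Or.inr (Or.inr (Or.inr (Or.inr (Or.inr (Or.inr ⟨hy, hx⟩)))))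
  · exfalso; omega


set_option maxHeartbeats 1000000 in
/-- For `T ≥ 13`, a transition-count vector `x` of a no-self-loop word over three states
whose state graph has exactly `q` 2-cycles, all on one pair of vertices, with
`3 ≤ q ≤ ⌊(T-1)/2⌋ - 3`, is the midpoint of two other points of the polytope
`conv{A_w}` and hence is not a vertex (extreme point). -/
theorem stmt17 (T : ℕ) (hT : 13 ≤ T)
    (q : ℕ) (hq3 : 3 ≤ q) (hqp : q ≤ (T - 1) / 2 - 3)
    (u : Fin T → Fin 3) (hu : NoLoop 3 T u)
    (x : {p : Fin 3 × Fin 3 // p.1 ≠ p.2} → ℕ)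
    (hx : ∀ p, x p = trCount 3 T u p.1)
    (i j : Fin 3) (hij : i ≠ j)
    (hq : min (x ⟨(i, j), hij⟩) (x ⟨(j, i), hij.symm⟩) = q)
    (hone : ∀ (a b : Fin 3) (hab : a ≠ b), ({a, b} : Finset (Fin 3)) ≠ {i, j} →
      min (x ⟨(a, b), hab⟩) (x ⟨(b, a), hab.symm⟩) = 0) :
    let P := convexHull ℝ (Set.range fun w : {w : Fin T → Fin 3 // NoLoop 3 T w} =>
      fun p : {p : Fin 3 × Fin 3 // p.1 ≠ p.2} => (trCount 3 T w.1 p.1 : ℝ));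
    (∃ y z : {p : Fin 3 × Fin 3 // p.1 ≠ p.2} → ℝ,
      y ∈ P ∧ z ∈ P ∧ y ≠ (fun p => (x p : ℝ)) ∧ z ≠ (fun p => (x p : ℝ)) ∧
      ∀ p, (x p : ℝ) = (1 / 2) * y p + (1 / 2) * z p) ∧
    (fun p => (x p : ℝ)) ∉ Set.extremePoints ℝ P := by
  intro P
  obtain ⟨k, hik, hjk⟩ : ∃ k : Fin 3, i ≠ k ∧ j ≠ k := by
    have : ∀ i j : Fin 3, i ≠ j → ∃ k, i ≠ k ∧ j ≠ k := by decide
    exact this i j hij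
  have hT1 : 1 ≤ T := by omega
  have hC : List.Chain' (· ≠ ·) (List.ofFn u) := (noLoop_iff_chain' T u).mp hu
  have hlen : (List.ofFn u).length = T := List.length_ofFn
  -- total count
  have htot : pc (List.ofFn u) i j + pc (List.ofFn u) j i + pc (List.ofFn u) i k
      + pc (List.ofFn u) k i + pc (List.ofFn u) j k + pc (List.ofFn u) k j = T - 1 := by
    have h9 := pc_total (List.ofFn u)
    rw [Fintype.sum_prod_type] at h9
    rw [sum3 i j k hij hik hjk (fun s => ∑ t : Fin 3, pc (List.ofFn u) s t)] at h9
    rw [sum3 i j k hij hik hjk (fun t => pc (List.ofFn u) i t),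
        sum3 i j k hij hik hjk (fun t => pc (List.ofFn u) j t),
        sum3 i j k hij hik hjk (fun t => pc (List.ofFn u) k t)] at h9
    rw [pc_diag _ hC i, pc_diag _ hC j, pc_diag _ hC k, hlen] at h9
    omega
  -- flow equations
  have hne : (List.ofFn u) ≠ [] := by
    intro h; rw [h] at hlen; simp at hlen; omega
  have hhead := List.head?_eq_head hne
  have hlast := List.getLast?_eq_getLast hne
  have hfi := pc_flow (List.ofFn u) i
  have hfj := pc_flow (List.ofFn u) j
  have hfk := pc_flow (List.ofFn u) k
  rw [sum3 i j k hij hik hjk (fun b => pc (List.ofFn u) i b),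
      sum3 i j k hij hik hjk (fun b => pc (List.ofFn u) b i),
      pc_diag _ hC i, hhead, hlast] at hfi
  rw [sum3 i j k hij hik hjk (fun b => pc (List.ofFn u) j b),
      sum3 i j k hij hik hjk (fun b => pc (List.ofFn u) b j),
      pc_diag _ hC j, hhead, hlast] at hfj
  rw [sum3 i j k hij hik hjk (fun b => pc (List.ofFn u) k b),
      sum3 i j k hij hik hjk (fun b => pc (List.ofFn u) b k),
      pc_diag _ hC k, hhead, hlast] at hfk
  simp only [Option.some.injEq] at hfi hfj hfk
  -- indicator bookkeeping
  have hji : j ≠ i := hij.symm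
  have hki : k ≠ i := hik.symm
  have hkj : k ≠ j := hjk.symm
  have he : (if (List.ofFn u).head hne = i then (1:ℕ) else 0)
      + (if (List.ofFn u).head hne = j then (1:ℕ) else 0)
      + (if (List.ofFn u).head hne = k then (1:ℕ) else 0) = 1 := by
    rcases cover3 i j k hij hik hjk ((List.ofFn u).head hne) with h | h | h <;>
      simp [h, hij, hik, hjk, hji, hki, hkj]
  have hf : (if (List.ofFn u).getLast hne = i then (1:ℕ) else 0)
      + (if (List.ofFn u).getLast hne = j then (1:ℕ) else 0)
      + (if (List.ofFn u).getLast hne = k then (1:ℕ) else 0) = 1 := by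
    rcases cover3 i j k hij hik hjk ((List.ofFn u).getLast hne) with h | h | h <;>
      simp [h, hij, hik, hjk, hji, hki, hkj]
  generalize hEi : (if (List.ofFn u).head hne = i then (1:ℕ) else 0) = ei at hfi he
  generalize hEj : (if (List.ofFn u).head hne = j then (1:ℕ) else 0) = ej at hfj he
  generalize hEk : (if (List.ofFn u).head hne = k then (1:ℕ) else 0) = ek at hfk he
  generalize hFi : (if (List.ofFn u).getLast hne = i then (1:ℕ) else 0) = fi at hfi hf
  generalize hFj : (if (List.ofFn u).getLast hne = j then (1:ℕ) else 0) = fj at hfj hf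
  generalize hFk : (if (List.ofFn u).getLast hne = k then (1:ℕ) else 0) = fk at hfk hf
  -- min facts
  have hmin1 : min (pc (List.ofFn u) i j) (pc (List.ofFn u) j i) = q := by
    rw [← trCount_eq_pc, ← trCount_eq_pc, ← hx ⟨(i,j), hij⟩, ← hx ⟨(j,i), hij.symm⟩]
    exact hq
  have hsets : ∀ i j k : Fin 3, i ≠ j → i ≠ k → j ≠ k →
      (({i, k} : Finset (Fin 3)) ≠ {i, j} ∧ ({j, k} : Finset (Fin 3)) ≠ {i, j}) := by decide
  have hmin2 : min (pc (List.ofFn u) i k) (pc (List.ofFn u) k i) = 0 := by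
    rw [← trCount_eq_pc, ← trCount_eq_pc, ← hx ⟨(i,k), hik⟩, ← hx ⟨(k,i), hik.symm⟩]
    exact hone i k hik (hsets i j k hij hik hjk).1
  have hmin3 : min (pc (List.ofFn u) j k) (pc (List.ofFn u) k j) = 0 := by
    rw [← trCount_eq_pc, ← trCount_eq_pc, ← hx ⟨(j,k), hjk⟩, ← hx ⟨(k,j), hjk.symm⟩]
    exact hone j k hjk (hsets i j k hij hik hjk).2
  have KEY := arith T q (pc (List.ofFn u) i j) (pc (List.ofFn u) j i)
    (pc (List.ofFn u) i k) (pc (List.ofFn u) k i) (pc (List.ofFn u) j k)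
    (pc (List.ofFn u) k j) ei ej ek fi fj fk hT hq3 hqp he hf
    (by omega) (by omega) (by omega) hmin1 hmin2 hmin3 htot
  clear hfi hfj hfk he hf hEi hEj hEk hFi hFj hFk
  -- build the two neighbour words
  have MAIN : ∃ w₁ w₂ : Fin T → Fin 3, NoLoop 3 T w₁ ∧ NoLoop 3 T w₂ ∧
      (∃ p₀ : {p : Fin 3 × Fin 3 // p.1 ≠ p.2},
        trCount 3 T w₁ p₀.1 ≠ trCount 3 T u p₀.1 ∧
        trCount 3 T w₂ p₀.1 ≠ trCount 3 T u p₀.1) ∧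
      ∀ s t : Fin 3, s ≠ t → (trCount 3 T u (s, t) : ℝ) =
        (1/2) * trCount 3 T w₁ (s, t) + (1/2) * trCount 3 T w₂ (s, t) := by
    rcases KEY with ⟨h4, h5, hbq, ha1, hb3, hm2, hm'2, htot', hpat⟩ |
      ⟨h4, h5, hbq, ha1, hb3, hm2, hm'2, htot', hpat⟩
    · obtain ⟨w₁, w₂, hw₁, hw₂, hcoord₁, hcoord₂, hmid⟩ :=
        build T hT1 i j k hij hik hjk u
          (pc (List.ofFn u) i j) (pc (List.ofFn u) j i) (pc (List.ofFn u) j k)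
          (pc (List.ofFn u) k i)
          (trCount_eq_pc T u i j) (trCount_eq_pc T u j i) (trCount_eq_pc T u j k)
          (trCount_eq_pc T u k i)
          (by rw [trCount_eq_pc]; exact h4) (by rw [trCount_eq_pc]; exact h5)
          htot' ha1 hb3 hm2 hm'2 hpat
      refine ⟨w₁, w₂, hw₁, hw₂, ⟨⟨(j, i), hij.symm⟩, ?_, ?_⟩, hmid⟩
      · show trCount 3 T w₁ (j, i) ≠ trCount 3 T u (j, i)
        rw [hcoord₁, trCount_eq_pc]; omega
      · show trCount 3 T w₂ (j, i) ≠ trCount 3 T u (j, i)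
        rw [trCount_eq_pc T u]; omega
    · obtain ⟨w₁, w₂, hw₁, hw₂, hcoord₁, hcoord₂, hmid⟩ :=
        build T hT1 j i k hij.symm hjk hik u
          (pc (List.ofFn u) j i) (pc (List.ofFn u) i j) (pc (List.ofFn u) i k)
          (pc (List.ofFn u) k j)
          (trCount_eq_pc T u j i) (trCount_eq_pc T u i j) (trCount_eq_pc T u i k)
          (trCount_eq_pc T u k j)
          (by rw [trCount_eq_pc]; exact h4) (by rw [trCount_eq_pc]; exact h5)
          htot' ha1 hb3 hm2 hm'2 hpat
      refine ⟨w₁, w₂, hw₁, hw₂, ⟨⟨(i, j), hij⟩, ?_, ?_⟩, ?_⟩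
      · show trCount 3 T w₁ (i, j) ≠ trCount 3 T u (i, j)
        rw [hcoord₁, trCount_eq_pc]; omega
      · show trCount 3 T w₂ (i, j) ≠ trCount 3 T u (i, j)
        rw [trCount_eq_pc T u]; omega
      · intro s t hst; exact hmid s t hst
  obtain ⟨w₁, w₂, hw₁, hw₂, ⟨p₀, hp₁, hp₂⟩, hmid⟩ := MAIN
  have H1 : ∃ y z : {p : Fin 3 × Fin 3 // p.1 ≠ p.2} → ℝ,
      y ∈ P ∧ z ∈ P ∧ y ≠ (fun p => (x p : ℝ)) ∧ z ≠ (fun p => (x p : ℝ)) ∧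
      ∀ p, (x p : ℝ) = (1 / 2) * y p + (1 / 2) * z p := by
    refine ⟨fun p => (trCount 3 T w₁ p.1 : ℝ), fun p => (trCount 3 T w₂ p.1 : ℝ),
      subset_convexHull ℝ _ ⟨⟨w₁, hw₁⟩, rfl⟩, subset_convexHull ℝ _ ⟨⟨w₂, hw₂⟩, rfl⟩,
      ?_, ?_, ?_⟩
    · intro hcontra
      have := congrFun hcontra p₀
      rw [hx p₀] at this
      exact hp₁ (Nat.cast_injective this)
    · intro hcontra
      have := congrFun hcontra p₀
      rw [hx p₀] at this
      exact hp₂ (Nat.cast_injective this)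
    · rintro ⟨⟨s, t⟩, hst⟩
      rw [hx ⟨(s, t), hst⟩]
      exact hmid s t hst
  refine ⟨H1, ?_⟩
  intro hext
  obtain ⟨y, z, hy, hz, hyx, hzx, hmid'⟩ := H1
  have hseg : (fun p => (x p : ℝ)) ∈ openSegment ℝ y z := by
    refine ⟨1/2, 1/2, by norm_num, by norm_num, by norm_num, ?_⟩
    funext p
    have := hmid' p
    simp only [Pi.add_apply, Pi.smul_apply, smul_eq_mul]
    linarith [hmid' p]
  exact hyx (hext.2 hy hz hseg)
end
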